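/- arXiv:1404.5086 — 6 statements merged into one kernel-verified Lean document; each statement's English description precedes it below -/
import Mathlib

section
/- Let X = ⊕_{i∈I} X_i be a finite direct sum of subspaces of a vector space X over a field F, and let g : X → ℝ≥0 satisfy g(x) = Σ_{i∈I} g(ρ_i(x)) for all x (where ρ_i is the projection onto X_i along the other summands), g(0) = 0, and g nonnegative. Let A : X → X be linear with A X_i ⊆ X_i, and B : U → X linear with E_j = B⁻¹(X_j). Then for every i ∈ I and every x_i ∈ X_i, the infimum of g(A x_i + B u) over u ranging in the subspace Σ_{j∈I} E_j equals the infimum of g(A x_i + B u) over u ∈ E_i. -/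
/-- If `g` is additive across the decomposition, then for `x_i ∈ X_i`,
the infimum of `g(A x_i + B u)` over `u ∈ Σ_j E_j` equals the infimum over `u ∈ E_i`. -/
theorem inf_over_sum_eq_inf_over_component
    {F U X : Type*} [Field F] [AddCommGroup U] [Module F U]
    [AddCommGroup X] [Module F X] {ι : Type*} [Fintype ι] [DecidableEq ι]
    (A : X →ₗ[F] X) (B : U →ₗ[F] X) (Xs : ι → Submodule F X)
    (hXs : DirectSum.IsInternal Xs)
    (hA : ∀ i, ∀ x ∈ Xs i, A x ∈ Xs i)
    (ρ : ι → X →ₗ[F] X)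
    (hρmem : ∀ i x, ρ i x ∈ Xs i)
    (hρsum : ∀ x, ∑ i, ρ i x = x)
    (hρproj : ∀ i j, ∀ x ∈ Xs j, ρ i x = if i = j then x else 0)
    (g : X → ℝ) (hg0 : g 0 = 0) (hgnn : ∀ x, 0 ≤ g x)
    (hgadd : ∀ x, g x = ∑ i, g (ρ i x))
    (Es : ι → Submodule F U) (hEs : ∀ i, Es i = Submodule.comap B (Xs i)) :
    ∀ i, ∀ x ∈ Xs i,
      sInf ((fun u => g (A x + B u)) '' ((⨆ j, Es j : Submodule F U) : Set U)) =
      sInf ((fun u => g (A x + B u)) '' ((Es i : Submodule F U) : Set U)) := by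
  intro i x hx
  have hnei : ((fun u => g (A x + B u)) '' ((Es i : Submodule F U) : Set U)).Nonempty :=
    ⟨_, 0, Submodule.zero_mem _, rfl⟩
  have hneS : ((fun u => g (A x + B u)) '' ((⨆ j, Es j : Submodule F U) : Set U)).Nonempty :=
    ⟨_, 0, Submodule.zero_mem _, rfl⟩
  have hbdS : BddBelow ((fun u => g (A x + B u)) '' ((⨆ j, Es j : Submodule F U) : Set U)) := by
    refine ⟨0, ?_⟩; rintro _ ⟨u, hu, rfl⟩; exact hgnn _
  have hbdi : BddBelow ((fun u => g (A x + B u)) '' ((Es i : Submodule F U) : Set U)) := by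
    refine ⟨0, ?_⟩; rintro _ ⟨u, hu, rfl⟩; exact hgnn _
  apply le_antisymm
  · refine csInf_le_csInf hbdS hnei (Set.image_mono ?_)
    intro u hu
    exact Submodule.mem_iSup_of_mem i hu
  · refine le_csInf hneS ?_
    rintro b ⟨u, hu, rfl⟩
    obtain ⟨f, hf, hsum⟩ := (Submodule.mem_iSup_iff_exists_finsupp Es u).mp hu
    have hu' : u = ∑ j, f j := by
      rw [← hsum, Finsupp.sum_fintype]; intro j; rfl
    have hBf : ∀ j, B (f j) ∈ Xs j := fun j => by
      have := hf j; rw [hEs j] at this; exact this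
    have hρk : ∀ k, ρ k (A x + B u) = (if k = i then A x else 0) + B (f k) := by
      intro k
      rw [hu', map_add, map_sum, map_sum]
      rw [hρproj k i (A x) (hA i x hx)]
      congr 1
      have : ∀ j, ρ k (B (f j)) = if k = j then B (f j) else 0 := fun j =>
        hρproj k j _ (hBf j)
      rw [Finset.sum_congr rfl (fun j _ => this j)]
      simp
    have key : g (A x + B (f i)) ≤ g (A x + B u) := by
      rw [hgadd (A x + B u)]
      have hterm : g (A x + B (f i)) = g (ρ i (A x + B u)) := by
        rw [hρk i]; simp
      rw [hterm]
      exact Finset.single_le_sum (f := fun k => g (ρ k (A x + B u))) (fun k _ => hgnn _) (Finset.mem_univ i)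
    calc sInf ((fun u => g (A x + B u)) '' ((Es i : Submodule F U) : Set U))
        ≤ g (A x + B (f i)) := csInf_le hbdi ⟨f i, hf i, rfl⟩
      _ ≤ g (A x + B u) := key
end

section
/- Let X = ⊕_{i∈I} X_i be a finite direct sum with A X_i ⊆ X_i, B : U → X linear, E_i = B⁻¹(X_i), and g : X → ℝ≥0 additive across the decomposition (g(x) = Σ_i g(ρ_i x)) with g(x)=0 ↔ x=0. Suppose U = Σ_{i∈I} E_i. Then for every horizon T, the cost-to-go functions J_t* of the DP recursion (J_T* = g, J_t*(x) = g(x) + min_{u∈U} J_{t+1}*(Ax+Bu)) are themselves additive across the decomposition: J_t*(x) = Σ_{i∈I} J_t*(ρ_i x) for all x ∈ X and all t ≤ T. -/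
/-- Cost-to-go functions of the finite-horizon DP problem, indexed by the number of
steps to go: `Jgo 0 = g` and `Jgo (k+1) x = g x + inf_{u} Jgo k (A x + B u)`
(so that `J_t^* = Jgo (T - t)` for horizon `T`). -/
noncomputable def Jgo {F U X : Type*} [Field F] [AddCommGroup U] [Module F U]
    [AddCommGroup X] [Module F X]
    (g : X → ℝ) (A : X →ₗ[F] X) (B : U →ₗ[F] X) : ℕ → X → ℝ
  | 0 => g
  | (k + 1) => fun x => g x + sInf (Set.range fun u : U => Jgo g A B k (A x + B u))

/-- if `g` is additive across the invariant decomposition and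
`U = Σ_i E_i`, then every cost-to-go function is additive across the decomposition. -/
theorem costToGo_additive
    {F U X : Type*} [Field F] [AddCommGroup U] [Module F U]
    [AddCommGroup X] [Module F X] {ι : Type*} [Fintype ι] [DecidableEq ι]
    (A : X →ₗ[F] X) (B : U →ₗ[F] X) (Xs : ι → Submodule F X)
    (hXs : DirectSum.IsInternal Xs)
    (hA : ∀ i, ∀ x ∈ Xs i, A x ∈ Xs i)
    (ρ : ι → X →ₗ[F] X)
    (hρmem : ∀ i x, ρ i x ∈ Xs i)
    (hρsum : ∀ x, ∑ i, ρ i x = x)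
    (hρproj : ∀ i j, ∀ x ∈ Xs j, ρ i x = if i = j then x else 0)
    (g : X → ℝ) (hgnn : ∀ x, 0 ≤ g x) (hg0 : ∀ x, g x = 0 ↔ x = 0)
    (hgadd : ∀ x, g x = ∑ i, g (ρ i x))
    (Es : ι → Submodule F U) (hEs : ∀ i, Es i = Submodule.comap B (Xs i))
    (hU : (⊤ : Submodule F U) = ⨆ i, Es i)
    (hatt : ∀ k (x : X), ∃ u : U, ∀ v : U,
      Jgo g A B k (A x + B u) ≤ Jgo g A B k (A x + B v)) :
    ∀ k (x : X), Jgo g A B k x = ∑ i, Jgo g A B k (ρ i x) := by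
  -- decomposition of controls
  have hdec : ∀ u : U, ∃ c : ι → U, (∀ i, c i ∈ Es i) ∧ ∑ i, c i = u := by
    intro u
    have hu : u ∈ ⨆ i, Es i := by rw [← hU]; trivial
    refine Submodule.iSup_induction Es
      (motive := fun v => ∃ c : ι → U, (∀ i, c i ∈ Es i) ∧ ∑ i, c i = v) hu ?_ ?_ ?_
    · intro i v hv
      refine ⟨Pi.single i v, ?_, ?_⟩
      · intro j
        by_cases h : j = i
        · subst h; simpa using hv
        · simp [Pi.single_eq_of_ne h]
      · simp
    · exact ⟨0, fun i => (Es i).zero_mem, by simp⟩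
    · rintro v w ⟨c1, h1, h1s⟩ ⟨c2, h2, h2s⟩
      exact ⟨c1 + c2, fun i => (Es i).add_mem (h1 i) (h2 i), by
        simp [Finset.sum_add_distrib, h1s, h2s]⟩
  -- commutation of projections with A
  have hAcomm : ∀ (i : ι) (x : X), ρ i (A x) = A (ρ i x) := by
    intro i x
    conv_lhs => rw [← hρsum x, map_sum, map_sum]
    have : ∀ j : ι, ρ i (A (ρ j x)) = if i = j then A (ρ j x) else 0 := fun j =>
      hρproj i j _ (hA j _ (hρmem j x))
    simp [this]
  -- projection of B applied to a decomposed control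
  have hρB : ∀ (c : ι → U), (∀ j, c j ∈ Es j) → ∀ i, ρ i (B (∑ j, c j)) = B (c i) := by
    intro c hc i
    rw [map_sum, map_sum]
    have : ∀ j : ι, ρ i (B (c j)) = if i = j then B (c j) else 0 := by
      intro j
      refine hρproj i j _ ?_
      have := hc j
      rw [hEs j] at this
      exact this
    simp [this]
  -- nonnegativity of all cost-to-go functions
  have hnn : ∀ k (x : X), 0 ≤ Jgo g A B k x := by
    intro k
    induction k with
    | zero => exact hgnn
    | succ k ih =>
      intro x
      refine add_nonneg (hgnn x) (Real.sInf_nonneg ?_)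
      rintro _ ⟨u, rfl⟩
      exact ih _
  -- attained infima
  have hmin : ∀ k (x : X) (u₀ : U),
      (∀ v : U, Jgo g A B k (A x + B u₀) ≤ Jgo g A B k (A x + B v)) →
      sInf (Set.range fun u : U => Jgo g A B k (A x + B u)) = Jgo g A B k (A x + B u₀) := by
    intro k x u₀ h
    refine IsLeast.csInf_eq ⟨⟨u₀, rfl⟩, ?_⟩
    rintro _ ⟨v, rfl⟩
    exact h v
  intro k
  induction k with
  | zero => exact hgadd
  | succ k ih =>
    intro x
    obtain ⟨u₀, hu₀⟩ := hatt k x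
    choose w hw using fun i => hatt k (ρ i x)
    choose c hcmem hcsum using fun i => hdec (w i)
    obtain ⟨d, hdmem, hdsum⟩ := hdec u₀
    -- expansion lemma
    have expand : ∀ (i : ι) (u : U) (cu : ι → U), (∀ j, cu j ∈ Es j) → (∑ j, cu j = u) →
        Jgo g A B k (A (ρ i x) + B u)
          = ∑ j, Jgo g A B k ((if j = i then A (ρ i x) else 0) + B (cu j)) := by
      intro i u cu hcu hcus
      rw [ih]
      refine Finset.sum_congr rfl fun j _ => ?_
      congr 1
      rw [map_add]
      congr 1
      · exact hρproj j i _ (hA i _ (hρmem i x))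
      · rw [← hcus]; exact hρB cu hcu j
    -- termwise: the diagonal component of a minimizer is at least as good
    have hdiag : ∀ i : ι, Jgo g A B k (A (ρ i x) + B (c i i))
        ≤ Jgo g A B k (A (ρ i x) + B (w i)) := by
      intro i
      rw [expand i (w i) (c i) (hcmem i) (hcsum i)]
      have := Finset.single_le_sum
        (f := fun j => Jgo g A B k ((if j = i then A (ρ i x) else 0) + B (c i j)))
        (fun j _ => hnn k _) (Finset.mem_univ i)
      simpa using this
    have e1 : Jgo g A B k (A x + B u₀) = ∑ i, Jgo g A B k (A (ρ i x) + B (d i)) := by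
      rw [ih]
      refine Finset.sum_congr rfl fun i _ => ?_
      congr 1
      rw [map_add, hAcomm]
      congr 1
      rw [← hdsum]
      exact hρB d hdmem i
    have e2 : Jgo g A B k (A x + B (∑ i, c i i))
        = ∑ i, Jgo g A B k (A (ρ i x) + B (c i i)) := by
      rw [ih]
      refine Finset.sum_congr rfl fun i _ => ?_
      congr 1
      rw [map_add, hAcomm]
      congr 1
      exact hρB (fun j => c j j) (fun j => hcmem j j) i
    have hub : ∑ i, Jgo g A B k (A (ρ i x) + B (w i)) ≤ Jgo g A B k (A x + B u₀) := by
      rw [e1]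
      exact Finset.sum_le_sum fun i _ => hw i (d i)
    have hlb : Jgo g A B k (A x + B u₀) ≤ ∑ i, Jgo g A B k (A (ρ i x) + B (w i)) :=
      calc Jgo g A B k (A x + B u₀) ≤ Jgo g A B k (A x + B (∑ i, c i i)) := hu₀ _
        _ = ∑ i, Jgo g A B k (A (ρ i x) + B (c i i)) := e2
        _ ≤ ∑ i, Jgo g A B k (A (ρ i x) + B (w i)) := Finset.sum_le_sum fun i _ => hdiag i
    have key : Jgo g A B k (A x + B u₀) = ∑ i, Jgo g A B k (A (ρ i x) + B (w i)) :=
      le_antisymm hlb hub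
    show g x + sInf (Set.range fun u : U => Jgo g A B k (A x + B u))
        = ∑ i, (g (ρ i x) + sInf (Set.range fun u : U => Jgo g A B k (A (ρ i x) + B u)))
    rw [hmin k x u₀ hu₀, key, hgadd x, Finset.sum_add_distrib]
    congr 1
    exact Finset.sum_congr rfl fun i _ => (hmin k (ρ i x) (w i) (hw i)).symm
end

section
/- Let X = ⊕_{i∈I} X_i with A X_i ⊆ X_i, B : U → X linear and injective, E_i = B⁻¹(X_i), and V a subspace with U = (⊕_i E_i) ⊕ V. Let g : X → ℝ≥0 be additive across the decomposition with g(x)=0 ↔ x=0. Suppose for every x ∈ X there exists u ∈ Σ_i E_i minimizing g(Ax + Bu) over all u ∈ U. Then A(X) ∩ B(V) = {0}. -/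
/-- if for every `x` some `u ∈ Σ_i E_i` minimizes `g(Ax + Bu)` over all
of `U`, then `A(X) ∩ B(V) = {0}`, where `V` is a complement of `⊕_i E_i` in `U`. -/
theorem rangeA_inter_BV_eq_bot
    {F U X : Type*} [Field F] [AddCommGroup U] [Module F U]
    [AddCommGroup X] [Module F X] {ι : Type*} [Fintype ι] [DecidableEq ι]
    (A : X →ₗ[F] X) (B : U →ₗ[F] X) (hB : Function.Injective B)
    (Xs : ι → Submodule F X) (hXs : DirectSum.IsInternal Xs)
    (hA : ∀ i, ∀ x ∈ Xs i, A x ∈ Xs i)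
    (ρ : ι → X →ₗ[F] X)
    (hρmem : ∀ i x, ρ i x ∈ Xs i)
    (hρsum : ∀ x, ∑ i, ρ i x = x)
    (hρproj : ∀ i j, ∀ x ∈ Xs j, ρ i x = if i = j then x else 0)
    (Es : ι → Submodule F U) (hEs : ∀ i, Es i = Submodule.comap B (Xs i))
    (hEind : iSupIndep Es)
    (V : Submodule F U) (hUV : (⨆ i, Es i) ⊔ V = ⊤)
    (hdisj : Disjoint (⨆ i, Es i) V)
    (g : X → ℝ) (hgnn : ∀ x, 0 ≤ g x) (hg0 : ∀ x, g x = 0 ↔ x = 0)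
    (hgadd : ∀ x, g x = ∑ i, g (ρ i x))
    (hmin : ∀ x : X, ∃ u ∈ (⨆ i, Es i : Submodule F U), ∀ v : U,
      g (A x + B u) ≤ g (A x + B v)) :
    LinearMap.range A ⊓ Submodule.map B V = ⊥ := by
  rw [eq_bot_iff]
  rintro y ⟨⟨x, hx⟩, ⟨v, hv, hBv⟩⟩
  obtain ⟨u, hu, hmin'⟩ := hmin x
  have hzero : A x + B (-v) = 0 := by
    rw [map_neg, hBv, hx]; abel
  have h0 : g (A x + B u) = 0 := by
    have h1 := hmin' (-v)
    rw [hzero, (hg0 0).mpr rfl] at h1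
    exact le_antisymm h1 (hgnn _)
  have h1 : A x + B u = 0 := (hg0 _).mp h0
  have hvu : v = -u := by
    apply hB
    rw [map_neg]
    have : B v = A x := hBv.trans hx.symm
    rw [this]
    exact eq_neg_of_add_eq_zero_left h1
  have hvE : v ∈ ⨆ i, Es i := by
    rw [hvu]; exact neg_mem hu
  have hv0 : v = 0 := Submodule.disjoint_def.mp hdisj v hvE hv
  simp [← hBv, hv0]
end

section
/- One-step decomposition of the minimization: let X = ⊕_{i∈I} X_i with A X_i ⊆ X_i, g : X → ℝ≥0 additive across the decomposition with g(0) = 0, B : U → X linear with E_i = B⁻¹(X_i) and U = Σ_i E_i. Then for every x ∈ X, min_{u∈U} g(Ax + Bu) = Σ_{i∈I} min_{u_i∈E_i} g(A ρ_i(x) + B u_i), provided all minima are attained. -/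
/-- one-step decomposition of the minimization:
`min_{u ∈ U} g(Ax + Bu) = Σ_i min_{u_i ∈ E_i} g(A ρ_i x + B u_i)`. -/
theorem one_step_min_decomposition
    {F U X : Type*} [Field F] [AddCommGroup U] [Module F U]
    [AddCommGroup X] [Module F X] {ι : Type*} [Fintype ι] [DecidableEq ι]
    (A : X →ₗ[F] X) (B : U →ₗ[F] X)
    (Xs : ι → Submodule F X) (hXs : DirectSum.IsInternal Xs)
    (hA : ∀ i, ∀ x ∈ Xs i, A x ∈ Xs i)
    (ρ : ι → X →ₗ[F] X)
    (hρmem : ∀ i x, ρ i x ∈ Xs i)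
    (hρsum : ∀ x, ∑ i, ρ i x = x)
    (hρproj : ∀ i j, ∀ x ∈ Xs j, ρ i x = if i = j then x else 0)
    (g : X → ℝ) (hgnn : ∀ x, 0 ≤ g x) (hg0 : g 0 = 0)
    (hgadd : ∀ x, g x = ∑ i, g (ρ i x))
    (Es : ι → Submodule F U) (hEs : ∀ i, Es i = Submodule.comap B (Xs i))
    (hU : (⊤ : Submodule F U) = ⨆ i, Es i)
    (hmin : ∀ x : X, ∃ u : U, ∀ v : U, g (A x + B u) ≤ g (A x + B v))
    (hminE : ∀ i (x : X), ∃ u ∈ Es i, ∀ v ∈ Es i,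
      g (A x + B u) ≤ g (A x + B v)) :
    ∀ x : X, sInf (Set.range fun u : U => g (A x + B u)) =
      ∑ i, sInf ((fun u : U => g (A (ρ i x) + B u)) '' (Es i : Set U)) := by
  intro x
  -- key identity: decomposing u = ∑ f i with f i ∈ Es i
  have key : ∀ (f : ι → U), (∀ i, f i ∈ Es i) →
      g (A x + B (∑ i, f i)) = ∑ i, g (A (ρ i x) + B (f i)) := by
    intro f hf
    rw [hgadd]
    refine Finset.sum_congr rfl fun i _ => ?_
    congr 1
    have h1 : ρ i (A x) = A (ρ i x) := by
      conv_lhs => rw [← hρsum x, map_sum, map_sum]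
      rw [Finset.sum_eq_single i]
      · rw [hρproj i i _ (hA i _ (hρmem i x)), if_pos rfl]
      · intro j _ hj
        rw [hρproj i j _ (hA j _ (hρmem j x)), if_neg (Ne.symm hj)]
      · intro h; exact absurd (Finset.mem_univ i) h
    have h2 : ρ i (B (∑ j, f j)) = B (f i) := by
      rw [map_sum, map_sum]
      rw [Finset.sum_eq_single i]
      · have : B (f i) ∈ Xs i := by
          have := hf i; rw [hEs i] at this; exact this
        rw [hρproj i i _ this, if_pos rfl]
      · intro j _ hj
        have : B (f j) ∈ Xs j := by
          have := hf j; rw [hEs j] at this; exact this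
        rw [hρproj i j _ this, if_neg (Ne.symm hj)]
      · intro h; exact absurd (Finset.mem_univ i) h
    rw [map_add, h1, h2]
  obtain ⟨u, hu⟩ := hmin x
  choose w hw hwmin using hminE
  -- LHS value
  have hL : sInf (Set.range fun v : U => g (A x + B v)) = g (A x + B u) := by
    refine IsLeast.csInf_eq ⟨⟨u, rfl⟩, ?_⟩
    rintro y ⟨v, rfl⟩; exact hu v
  -- RHS values
  have hR : ∀ i, sInf ((fun v : U => g (A (ρ i x) + B v)) '' (Es i : Set U))
      = g (A (ρ i x) + B (w i (ρ i x))) := by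
    intro i
    refine IsLeast.csInf_eq ⟨⟨w i (ρ i x), hw i (ρ i x), rfl⟩, ?_⟩
    rintro y ⟨v, hv, rfl⟩; exact hwmin i (ρ i x) v hv
  rw [hL]
  simp only [hR]
  -- decompose u
  have hu_mem : u ∈ ⨆ i, Es i := by rw [← hU]; trivial
  rw [Submodule.mem_iSup_iff_exists_finsupp] at hu_mem
  obtain ⟨f, hf, hfsum⟩ := hu_mem
  have hfsum' : ∑ i, f i = u := by
    rw [← hfsum, Finsupp.sum_fintype]; intro i; rfl
  apply le_antisymm
  · calc g (A x + B u) ≤ g (A x + B (∑ i, w i (ρ i x))) := hu _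
      _ = ∑ i, g (A (ρ i x) + B (w i (ρ i x))) := key _ (fun i => hw i (ρ i x))
  · calc ∑ i, g (A (ρ i x) + B (w i (ρ i x)))
        ≤ ∑ i, g (A (ρ i x) + B (f i)) :=
          Finset.sum_le_sum fun i _ => hwmin i (ρ i x) (f i) (hf i)
      _ = g (A x + B (∑ i, f i)) := (key _ hf).symm
      _ = g (A x + B u) := by rw [hfsum']
end

section
/- For x ∈ X_j (a single summand of the direct sum X = ⊕_i X_i with A X_i ⊆ X_i) and g additive with g(0)=0 and g ≥ 0, and subsystems with controls u_i ∈ E_i = B⁻¹(X_i): any minimizer of (u_i)_{i∈I} ↦ g(Ax + Σ_i B u_i) over ∏_i E_i can be taken with u_i = 0 for all i ≠ j, and the minimal value equals min_{u_j ∈ E_j} g(Ax + B u_j). -/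
/-- for `x ∈ X_j`, the minimization of `g(Ax + Σ_i B u_i)` over
independent `u_i ∈ E_i` admits a minimizer with `u_i = 0` for all `i ≠ j`, whose
value equals `min_{u_j ∈ E_j} g(Ax + B u_j)`. -/
theorem min_over_product_eq_min_over_component
    {F U X : Type*} [Field F] [AddCommGroup U] [Module F U]
    [AddCommGroup X] [Module F X] {ι : Type*} [Fintype ι] [DecidableEq ι]
    (A : X →ₗ[F] X) (B : U →ₗ[F] X)
    (Xs : ι → Submodule F X) (hXs : DirectSum.IsInternal Xs)
    (hA : ∀ i, ∀ x ∈ Xs i, A x ∈ Xs i)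
    (ρ : ι → X →ₗ[F] X)
    (hρmem : ∀ i x, ρ i x ∈ Xs i)
    (hρsum : ∀ x, ∑ i, ρ i x = x)
    (hρproj : ∀ i j, ∀ x ∈ Xs j, ρ i x = if i = j then x else 0)
    (g : X → ℝ) (hgnn : ∀ x, 0 ≤ g x) (hg0 : g 0 = 0)
    (hgadd : ∀ x, g x = ∑ i, g (ρ i x))
    (Es : ι → Submodule F U) (hEs : ∀ i, Es i = Submodule.comap B (Xs i))
    (j : ι) (x : X) (hx : x ∈ Xs j)
    (hattj : ∃ uj ∈ Es j, ∀ w ∈ Es j, g (A x + B uj) ≤ g (A x + B w)) :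
    ∃ u : ι → U, (∀ i, u i ∈ Es i) ∧ (∀ i, i ≠ j → u i = 0) ∧
      (∀ v : ι → U, (∀ i, v i ∈ Es i) →
        g (A x + ∑ i, B (u i)) ≤ g (A x + ∑ i, B (v i))) ∧
      (∀ w ∈ Es j, g (A x + B (u j)) ≤ g (A x + B w)) ∧
      g (A x + ∑ i, B (u i)) = g (A x + B (u j)) := by
  obtain ⟨uj, hujE, hujmin⟩ := hattj
  have hBX : ∀ i, ∀ w ∈ Es i, B w ∈ Xs i := by
    intro i w hw; rw [hEs i] at hw; exact hw
  have key : ∀ v : ι → U, (∀ i, v i ∈ Es i) →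
      g (A x + B (v j)) ≤ g (A x + ∑ i, B (v i)) := by
    intro v hv
    have hAx : A x ∈ Xs j := hA j x hx
    have hρ : ∀ i, ρ i (A x + ∑ k, B (v k)) = (if i = j then A x else 0) + B (v i) := by
      intro i
      have h1 : ρ i (A x + ∑ k, B (v k)) = ρ i (A x) + ∑ k, ρ i (B (v k)) := by
        simp [map_add, map_sum]
      rw [h1, hρproj i j (A x) hAx]
      congr 1
      have h2 : ∀ k, ρ i (B (v k)) = if i = k then B (v k) else 0 := fun k =>
        hρproj i k _ (hBX k _ (hv k))
      simp only [h2]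
      simp
    rw [hgadd (A x + ∑ i, B (v i))]
    have hterm : g (A x + B (v j)) = g (ρ j (A x + ∑ k, B (v k))) := by
      rw [hρ j]; simp
    rw [hterm]
    exact Finset.single_le_sum (f := fun i => g (ρ i (A x + ∑ k, B (v k)))) (fun i _ => hgnn _) (Finset.mem_univ j)
  set u : ι → U := fun i => if i = j then uj else 0 with hu
  have huj : u j = uj := by simp [hu]
  have huE : ∀ i, u i ∈ Es i := by
    intro i
    by_cases h : i = j
    · subst h; simpa [hu] using hujE
    · simp [hu, h]
  have hsum : ∑ i, B (u i) = B uj := by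
    have : ∀ i, B (u i) = if i = j then B uj else 0 := by
      intro i; by_cases h : i = j <;> simp [hu, h]
    simp only [this]
    simp
  refine ⟨u, huE, ?_, ?_, ?_, ?_⟩
  · intro i hi; simp [hu, hi]
  · intro v hv
    rw [hsum]
    calc g (A x + B uj) ≤ g (A x + B (v j)) := hujmin (v j) (hv j)
      _ ≤ g (A x + ∑ i, B (v i)) := key v hv
  · intro w hw; rw [huj]; exact hujmin w hw
  · rw [hsum, huj]
end

section
/- For the concrete system over ℤ/3 with A = [[1,1,0],[0,2,0],[0,0,1]] and B = [[1,0],[1,1],[0,1]] acting on X = (ℤ/3)³ and U = (ℤ/3)², the subspaces X₁ = span{(1,0,0)}, X₂ = span{(1,1,0)}, X₃ = span{(0,0,1)} are A-invariant, X = X₁ ⊕ X₂ ⊕ X₃, and the preimages satisfy E₁ = B⁻¹(X₁) = {0}, E₃ = B⁻¹(X₃) = {0}, while B⁻¹(X₂) = span{(1,0)}; in particular U ≠ E₁ + E₂ + E₃. -/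
/-- the concrete system over `ℤ/3` with
`A = [[1,1,0],[0,2,0],[0,0,1]]` and `B = [[1,0],[1,1],[0,1]]`: the stated
one-dimensional subspaces are `A`-invariant and decompose `X` as a direct sum,
the preimages under `B` are `E₁ = {0}`, `E₃ = {0}`, `E₂ = span{(1,0)}`, and
`E₁ + E₂ + E₃ ≠ U`. -/
theorem concrete_zmod3_example :
    let A : Matrix (Fin 3) (Fin 3) (ZMod 3) := !![1,1,0; 0,2,0; 0,0,1]
    let B : Matrix (Fin 3) (Fin 2) (ZMod 3) := !![1,0; 1,1; 0,1]
    let X1 : Submodule (ZMod 3) (Fin 3 → ZMod 3) :=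
      Submodule.span (ZMod 3) {![1, 0, 0]}
    let X2 : Submodule (ZMod 3) (Fin 3 → ZMod 3) :=
      Submodule.span (ZMod 3) {![1, 1, 0]}
    let X3 : Submodule (ZMod 3) (Fin 3 → ZMod 3) :=
      Submodule.span (ZMod 3) {![0, 0, 1]}
    (∀ x ∈ X1, A.mulVec x ∈ X1) ∧
    (∀ x ∈ X2, A.mulVec x ∈ X2) ∧
    (∀ x ∈ X3, A.mulVec x ∈ X3) ∧
    DirectSum.IsInternal (![X1, X2, X3] : Fin 3 → Submodule (ZMod 3) (Fin 3 → ZMod 3)) ∧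
    Submodule.comap B.mulVecLin X1 = ⊥ ∧
    Submodule.comap B.mulVecLin X3 = ⊥ ∧
    Submodule.comap B.mulVecLin X2 = Submodule.span (ZMod 3) {![1, 0]} ∧
    Submodule.comap B.mulVecLin X1 ⊔ Submodule.comap B.mulVecLin X2 ⊔
      Submodule.comap B.mulVecLin X3 ≠ (⊤ : Submodule (ZMod 3) (Fin 2 → ZMod 3)) := by
  intro A B X1 X2 X3
  have hli : LinearIndependent (ZMod 3)
      (![![1,0,0],![1,1,0],![0,0,1]] : Fin 3 → Fin 3 → ZMod 3) := by
    rw [Fintype.linearIndependent_iff]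
    decide
  have hfam : (![X1, X2, X3] : Fin 3 → Submodule (ZMod 3) (Fin 3 → ZMod 3)) =
      fun i => Submodule.span (ZMod 3) {(![![1,0,0],![1,1,0],![0,0,1]] :
        Fin 3 → Fin 3 → ZMod 3) i} := by
    funext i
    fin_cases i <;> rfl
  have h1 : Submodule.comap B.mulVecLin X1 = ⊥ := by
    ext u
    simp only [X1, Submodule.mem_comap, Submodule.mem_span_singleton, Submodule.mem_bot,
      Matrix.mulVecLin_apply, B]
    revert u
    decide
  have h3 : Submodule.comap B.mulVecLin X3 = ⊥ := by
    ext u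
    simp only [X3, Submodule.mem_comap, Submodule.mem_span_singleton, Submodule.mem_bot,
      Matrix.mulVecLin_apply, B]
    revert u
    decide
  have h2 : Submodule.comap B.mulVecLin X2 = Submodule.span (ZMod 3) {![1, 0]} := by
    ext u
    simp only [X2, Submodule.mem_comap, Submodule.mem_span_singleton,
      Matrix.mulVecLin_apply, B]
    revert u
    decide
  refine ⟨?_, ?_, ?_, ?_, h1, h3, h2, ?_⟩
  · intro x hx
    rw [Submodule.mem_span_singleton] at hx ⊢
    revert hx; revert x; decide
  · intro x hx
    rw [Submodule.mem_span_singleton] at hx ⊢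
    revert hx; revert x; decide
  · intro x hx
    rw [Submodule.mem_span_singleton] at hx ⊢
    revert hx; revert x; decide
  · rw [hfam]
    refine DirectSum.isInternal_submodule_of_iSupIndep_of_iSup_eq_top
      hli.iSupIndep_span_singleton ?_
    rw [← Submodule.span_range_eq_iSup]
    refine hli.span_eq_top_of_card_eq_finrank ?_
    simp
  · rw [h1, h2, h3, sup_bot_eq, bot_sup_eq]
    intro h
    have hmem : (![0, 1] : Fin 2 → ZMod 3) ∈ Submodule.span (ZMod 3) {(![1, 0] : Fin 2 → ZMod 3)} := h ▸ Submodule.mem_top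
    rw [Submodule.mem_span_singleton] at hmem
    exact absurd hmem (by decide)
end
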